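/- The minimum value of the level-1 graph energy E_1(ũ) over all extensions of the boundary values (a,b,c,d) equals (2/3)·E_0(u), where E_0(u) = (a−b)² + (a−c)² + (a−d)² + (b−c)² + (b−d)² + (c−d)². Hence the energy renormalization constant of the Sierpiński tetrahedron is r = 2/3. -/
import Mathlib

/-- The level-0 energy on the four boundary vertices of the tetrahedron. -/
def E0 (a b c d : ℝ) : ℝ :=
  (a - b) ^ 2 + (a - c) ^ 2 + (a - d) ^ 2 + (b - c) ^ 2 + (b - d) ^ 2 + (c - d) ^ 2

/-- The level-1 graph energy of the Sierpiński tetrahedron: the sum of squared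
differences over the 24 edges of the level-1 graph, with boundary values
`a, b, c, d` and midpoint values `x₁, …, x₆`. -/
def E1 (a b c d x₁ x₂ x₃ x₄ x₅ x₆ : ℝ) : ℝ :=
  (x₁ - a) ^ 2 + (x₁ - b) ^ 2 + (x₁ - x₂) ^ 2 + (x₁ - x₃) ^ 2 + (x₁ - x₄) ^ 2 + (x₁ - x₅) ^ 2 +
  (x₂ - b) ^ 2 + (x₂ - c) ^ 2 + (x₂ - x₃) ^ 2 + (x₂ - x₅) ^ 2 + (x₂ - x₆) ^ 2 +
  (x₃ - a) ^ 2 + (x₃ - c) ^ 2 + (x₃ - x₄) ^ 2 + (x₃ - x₆) ^ 2 +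
  (x₄ - a) ^ 2 + (x₄ - d) ^ 2 + (x₄ - x₅) ^ 2 + (x₄ - x₆) ^ 2 +
  (x₅ - b) ^ 2 + (x₅ - d) ^ 2 + (x₅ - x₆) ^ 2 +
  (x₆ - c) ^ 2 + (x₆ - d) ^ 2

/-- The minimum of the level-1 energy over all extensions of the boundary
values `(a, b, c, d)` equals `(2/3) · E0`: the energy renormalization constant
of the Sierpiński tetrahedron is `r = 2/3`. -/
theorem sierpinski_tetrahedron_energy_renormalization (a b c d : ℝ) :
    IsLeast {e : ℝ | ∃ x₁ x₂ x₃ x₄ x₅ x₆ : ℝ, e = E1 a b c d x₁ x₂ x₃ x₄ x₅ x₆}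
      ((2 / 3) * E0 a b c d) := by
  constructor
  · refine ⟨(2*a+2*b+c+d)/6, (a+2*b+2*c+d)/6, (2*a+b+2*c+d)/6,
      (2*a+b+c+2*d)/6, (a+2*b+c+2*d)/6, (a+b+2*c+2*d)/6, ?_⟩
    unfold E1 E0
    ring
  · rintro e ⟨x₁, x₂, x₃, x₄, x₅, x₆, rfl⟩
    set y₁ := x₁ - (2*a+2*b+c+d)/6 with hy₁
    set y₂ := x₂ - (a+2*b+2*c+d)/6 with hy₂
    set y₃ := x₃ - (2*a+b+2*c+d)/6 with hy₃
    set y₄ := x₄ - (2*a+b+c+2*d)/6 with hy₄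
    set y₅ := x₅ - (a+2*b+c+2*d)/6 with hy₅
    set y₆ := x₆ - (a+b+2*c+2*d)/6 with hy₆
    have key : E1 a b c d x₁ x₂ x₃ x₄ x₅ x₆ = (2/3) * E0 a b c d +
        (2*(y₁^2+y₂^2+y₃^2+y₄^2+y₅^2+y₆^2) +
         ((y₁-y₂)^2+(y₁-y₃)^2+(y₁-y₄)^2+(y₁-y₅)^2+(y₂-y₃)^2+(y₂-y₅)^2+(y₂-y₆)^2+
          (y₃-y₄)^2+(y₃-y₆)^2+(y₄-y₅)^2+(y₄-y₆)^2+(y₅-y₆)^2)) := by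
      unfold E1 E0
      rw [hy₁, hy₂, hy₃, hy₄, hy₅, hy₆]
      ring
    rw [key]
    have : (0:ℝ) ≤ 2*(y₁^2+y₂^2+y₃^2+y₄^2+y₅^2+y₆^2) +
        ((y₁-y₂)^2+(y₁-y₃)^2+(y₁-y₄)^2+(y₁-y₅)^2+(y₂-y₃)^2+(y₂-y₅)^2+(y₂-y₆)^2+
         (y₃-y₄)^2+(y₃-y₆)^2+(y₄-y₅)^2+(y₄-y₆)^2+(y₅-y₆)^2) := by positivity
    exact le_add_of_nonneg_right this
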